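/- Let k ≥ 2 and let G be a k-dicritical digraph. Then G is (k−1)-arc-connected: for every set A' of arcs of G with |A'| ≤ k−2, the digraph obtained from G by deleting the arcs of A' is strongly connected. Equivalently, for every partition (V_0, V_1) of V(G) into two nonempty parts, there are at least k−1 arcs from V_0 to V_1. -/

import Mathlib

/-- A (simple) digraph: a finite vertex set (of naturals) together with a finite
set of arcs between distinct vertices. -/
structure FDigraph where
  verts : Finset ℕ
  arcs : Finset (ℕ × ℕ)
  wf : ∀ a ∈ arcs, a.1 ∈ verts ∧ a.2 ∈ verts ∧ a.1 ≠ a.2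

namespace FDigraph

/-- Smart constructor: keeps only the legal arcs. -/
def mk' (V : Finset ℕ) (A : Finset (ℕ × ℕ)) : FDigraph where
  verts := V
  arcs := A.filter fun a => a.1 ∈ V ∧ a.2 ∈ V ∧ a.1 ≠ a.2
  wf := by
    intro a ha
    simp only [Finset.mem_filter] at ha
    exact ha.2

/-- A directed cycle, given as its (nonempty, duplicate-free) list of vertices:
every cyclically consecutive pair is an arc. -/
def IsDicycle (G : FDigraph) (l : List ℕ) : Prop :=
  l ≠ [] ∧ l.Nodup ∧ ∀ p ∈ l.zip (l.rotate 1), p ∈ G.arcs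

/-- A set of vertices is acyclic if it contains no directed cycle. -/
def AcyclicOn (G : FDigraph) (S : Set ℕ) : Prop :=
  ¬ ∃ l, G.IsDicycle l ∧ ∀ v ∈ l, v ∈ S

/-- A `k`-dicolouring: colours `0, …, k-1`, every colour class acyclic. -/
def IsDicolouring (G : FDigraph) (k : ℕ) (φ : ℕ → ℕ) : Prop :=
  (∀ v ∈ G.verts, φ v < k) ∧ ∀ c, G.AcyclicOn {v | φ v = c}

/-- The dichromatic number. -/
noncomputable def dichi (G : FDigraph) : ℕ := sInf {k | ∃ φ, G.IsDicolouring k φ}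

/-- Subdigraph relation. -/
def Subdigraph (H G : FDigraph) : Prop := H.verts ⊆ G.verts ∧ H.arcs ⊆ G.arcs

/-- `G` is `k`-dicritical. -/
def Dicritical (G : FDigraph) (k : ℕ) : Prop :=
  G.dichi = k ∧ ∀ H, Subdigraph H G → H ≠ G → H.dichi ≤ k - 1

/-- Induced subdigraph on a finite set of vertices. -/
def induce (G : FDigraph) (S : Finset ℕ) : FDigraph := mk' (G.verts ∩ S) G.arcs

def outDeg (G : FDigraph) (v : ℕ) : ℕ := (G.arcs.filter fun a => a.1 = v).card
def inDeg (G : FDigraph) (v : ℕ) : ℕ := (G.arcs.filter fun a => a.2 = v).card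
def deg (G : FDigraph) (v : ℕ) : ℕ := G.outDeg v + G.inDeg v

/-- Weak adjacency: an arc in either direction. -/
def wadj (G : FDigraph) (u v : ℕ) : Prop := (u, v) ∈ G.arcs ∨ (v, u) ∈ G.arcs

/-- Weak reachability. -/
def WReach (G : FDigraph) : ℕ → ℕ → Prop := Relation.ReflTransGen G.wadj

/-- A digraph is connected when its underlying graph is connected
(the empty digraph counts as connected). -/
def Connected (G : FDigraph) : Prop := ∀ u ∈ G.verts, ∀ v ∈ G.verts, G.WReach u v

/-- The set of connected components. -/
def components (G : FDigraph) : Set (Set ℕ) :=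
  {C | ∃ v ∈ G.verts, C = {u | u ∈ G.verts ∧ G.WReach v u}}

/-- The number of connected components. -/
noncomputable def numComponents (G : FDigraph) : ℕ := G.components.ncard

/-- Isomorphism of digraphs. -/
def Iso (G H : FDigraph) : Prop :=
  ∃ f : ℕ → ℕ, Set.BijOn f ↑G.verts ↑H.verts ∧
    ∀ u ∈ G.verts, ∀ v ∈ G.verts, ((u, v) ∈ G.arcs ↔ (f u, f v) ∈ H.arcs)

/-- The bidirected (complete) digraph `↔K_n`. -/
def completeD (n : ℕ) : FDigraph := mk' (Finset.range n) (Finset.range n ×ˢ Finset.range n)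

/-- The directed cycle `C⃗_n`. -/
def dirCycle (n : ℕ) : FDigraph :=
  mk' (Finset.range n)
    ((Finset.range n ×ˢ Finset.range n).filter fun a => a.2 = (a.1 + 1) % n)

/-- The bidirected cycle `↔C_n`. -/
def biCycle (n : ℕ) : FDigraph :=
  mk' (Finset.range n)
    ((Finset.range n ×ˢ Finset.range n).filter fun a =>
      a.2 = (a.1 + 1) % n ∨ a.1 = (a.2 + 1) % n)

/-- The Dirac join of `↔K_{k-2}` (on `{0,…,k-3}`) and the directed triangle
`C⃗_3` (on `{k-2, k-1, k}`). -/
def diracJoinExample (k : ℕ) : FDigraph :=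
  mk' (Finset.range (k + 1))
    ((Finset.range (k + 1) ×ˢ Finset.range (k + 1)).filter fun a =>
      a.1 < k - 2 ∨ a.2 < k - 2 ∨ a.2 = (if a.1 = k then k - 2 else a.1 + 1))

end FDigraph

namespace FDigraph

/-- Strong connectivity. -/
def StronglyConnected (G : FDigraph) : Prop :=
  ∀ u ∈ G.verts, ∀ v ∈ G.verts, Relation.ReflTransGen (fun a b => (a, b) ∈ G.arcs) u v

/-- Deleting a set of arcs. -/
def removeArcs (G : FDigraph) (A : Finset (ℕ × ℕ)) : FDigraph where
  verts := G.verts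
  arcs := G.arcs \ A
  wf := fun a ha => G.wf a (Finset.mem_sdiff.mp ha).1

end FDigraph


namespace FDigraph0

-- mod cancellation
lemma mod_cancel {m a b s : ℕ} (ha : a < m) (hb : b < m)
    (h : (a + s) % m = (b + s) % m) : a = b := by
  have h' : a ≡ b [MOD m] := Nat.ModEq.add_right_cancel' s h
  rwa [Nat.ModEq, Nat.mod_eq_of_lt ha, Nat.mod_eq_of_lt hb] at h'

lemma s_determined {m x y s : ℕ} (hx : x < m) (hy : y < m) (hs : s < m)
    (h : (y + s) % m = x) : s = (x + m - y) % m := by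
  have hm : 0 < m := Nat.lt_of_le_of_lt (Nat.zero_le _) hx
  have e1 : (y + (x + m - y) % m) % m = x := by
    have e2 : y + (x + m - y) = x + m := by omega
    rw [Nat.add_mod_mod, e2, Nat.add_mod_right, Nat.mod_eq_of_lt hx]
  have hA : (s + y) % m = x := by rw [Nat.add_comm]; exact h
  have hB : ((x + m - y) % m + y) % m = x := by rw [Nat.add_comm]; exact e1
  exact mod_cancel hs (Nat.mod_lt _ hm) (hA.trans hB.symm)

-- cycle closure lemma
lemma cycle_closed (l : List ℕ) (S : Set ℕ)
    (h : ∀ p ∈ l.zip (l.rotate 1), p.1 ∈ S → p.2 ∈ S) :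
    ∀ u ∈ l, u ∈ S → ∀ v ∈ l, v ∈ S := by
  intro u hu huS v hv
  obtain ⟨i, hi, rfl⟩ := List.mem_iff_getElem.mp hu
  obtain ⟨j, hj, rfl⟩ := List.mem_iff_getElem.mp hv
  set n := l.length with hn_def
  have hn : 0 < n := Nat.lt_of_le_of_lt (Nat.zero_le _) hi
  have step : ∀ i₁ (h₁ : i₁ < n) (h₂ : (i₁ + 1) % n < n),
      l[i₁] ∈ S → l[(i₁ + 1) % n] ∈ S := by
    intro i₁ h₁ h₂ hmem
    have hzl : (l.zip (l.rotate 1)).length = n := by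
      simp [List.length_zip, List.length_rotate, hn_def]
    have hi₁ : i₁ < (l.zip (l.rotate 1)).length := by omega
    have hp := h ((l.zip (l.rotate 1))[i₁]) (List.getElem_mem hi₁)
    rw [List.getElem_zip, List.getElem_rotate] at hp
    exact hp hmem
  have key : ∀ t (ht : (i + t) % n < n), l[(i + t) % n] ∈ S := by
    intro t
    induction t with
    | zero =>
      simp only [Nat.add_zero, Nat.mod_eq_of_lt hi]
      intro _; exact huS
    | succ t ih =>
      have hlt : (i + t) % n < n := Nat.mod_lt _ hn
      have h2 := step _ hlt (Nat.mod_lt _ hn) (ih hlt)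
      have he : ((i + t) % n + 1) % n = (i + (t + 1)) % n := by
        have := (Nat.mod_modEq (i + t) n).add_right 1
        simpa [Nat.add_assoc] using this
      simp only [he] at h2
      intro _; exact h2
  have e : (i + (n + j - i)) % n = j := by
    have e2 : i + (n + j - i) = n + j := by omega
    rw [e2, Nat.add_mod_left, Nat.mod_eq_of_lt hj]
  have hk := key (n + j - i) (by rw [e]; exact hj)
  simpa only [e] using hk

end FDigraph0

namespace FDigraph

lemma induce_verts (G : FDigraph) (S : Finset ℕ) : (G.induce S).verts = G.verts ∩ S := rfl

lemma mem_induce_arcs {G : FDigraph} {S : Finset ℕ} {a : ℕ × ℕ} :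
    a ∈ (G.induce S).arcs ↔
      a ∈ G.arcs ∧ (a.1 ∈ G.verts ∩ S ∧ a.2 ∈ G.verts ∩ S ∧ a.1 ≠ a.2) := by
  simp [induce, mk', Finset.mem_filter]

lemma dicycle_two_le (G : FDigraph) {l : List ℕ} (h : G.IsDicycle l) : 2 ≤ l.length := by
  obtain ⟨hne, hnd, harcs⟩ := h
  rcases l with _ | ⟨a, l⟩
  · simp at hne
  rcases l with _ | ⟨b, l⟩
  · have := harcs (a, a) (by simp [List.rotate_singleton])
    exact absurd rfl (G.wf _ this).2.2
  · simp only [List.length]; omega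

lemma mem_verts_of_dicycle (G : FDigraph) {l : List ℕ} (h : G.IsDicycle l) :
    ∀ v ∈ l, v ∈ G.verts := by
  intro v hv
  obtain ⟨i, hi, rfl⟩ := List.mem_iff_getElem.mp hv
  have hi' : i < (l.zip (l.rotate 1)).length := by
    simp only [List.length_zip, List.length_rotate, Nat.min_self]; omega
  have hp := h.2.2 _ (List.getElem_mem hi')
  rw [List.getElem_zip] at hp
  exact (G.wf _ hp).1

lemma dicycle_induce (G : FDigraph) (S : Finset ℕ) {l : List ℕ}
    (h : G.IsDicycle l) (hl : ∀ v ∈ l, v ∈ S) : (G.induce S).IsDicycle l := by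
  refine ⟨h.1, h.2.1, fun p hp => ?_⟩
  have hpa := h.2.2 p hp
  have h1 : p.1 ∈ l := (List.of_mem_zip hp).1
  have h2 : p.2 ∈ l := List.mem_rotate.mp (List.of_mem_zip hp).2
  have w := G.wf p hpa
  exact mem_induce_arcs.mpr ⟨hpa, Finset.mem_inter.mpr ⟨w.1, hl _ h1⟩,
    Finset.mem_inter.mpr ⟨w.2.1, hl _ h2⟩, w.2.2⟩

lemma exists_dicolouring (G : FDigraph) : ∃ n φ, G.IsDicolouring n φ := by
  refine ⟨G.verts.sup id + 1, id, fun v hv => ?_, fun c => ?_⟩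
  · exact Nat.lt_succ_of_le (Finset.le_sup (f := id) hv)
  · rintro ⟨l, hcyc, hsub⟩
    have h2 := G.dicycle_two_le hcyc
    rcases l with _ | ⟨a, l⟩
    · simp at h2
    rcases l with _ | ⟨b, l⟩
    · simp at h2
    · have ha : a = c := hsub a (by simp)
      have hb : b = c := hsub b (by simp)
      have hnd := hcyc.2.1
      rw [ha, hb] at hnd
      simp at hnd

lemma exists_dicolouring_of_le (G : FDigraph) {m : ℕ} (h : G.dichi ≤ m) :
    ∃ φ, G.IsDicolouring m φ := by
  have hne : {n | ∃ φ, G.IsDicolouring n φ}.Nonempty := by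
    obtain ⟨n, φ, hφ⟩ := G.exists_dicolouring
    exact ⟨n, φ, hφ⟩
  obtain ⟨φ, hφ⟩ := Nat.sInf_mem hne
  exact ⟨φ, fun v hv => lt_of_lt_of_le (hφ.1 v hv) h, hφ.2⟩

end FDigraph

/-- a `k`-dicritical digraph is `(k-1)`-arc-connected; equivalently
every nontrivial vertex partition has at least `k-1` arcs across it. -/
theorem dicritical_arc_connected (k : ℕ) (hk : 2 ≤ k) (G : FDigraph)
    (hG : G.Dicritical k) :
    (∀ A' ⊆ G.arcs, A'.card ≤ k - 2 → (G.removeArcs A').StronglyConnected) ∧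
    (∀ V0 V1 : Finset ℕ, V0 ∪ V1 = G.verts → Disjoint V0 V1 →
      V0.Nonempty → V1.Nonempty →
      k - 1 ≤ (G.arcs.filter fun a => a.1 ∈ V0 ∧ a.2 ∈ V1).card) := by
  classical
  have key : ∀ V0 V1 : Finset ℕ, V0 ∪ V1 = G.verts → Disjoint V0 V1 →
      V0.Nonempty → V1.Nonempty →
      k - 1 ≤ (G.arcs.filter fun a => a.1 ∈ V0 ∧ a.2 ∈ V1).card := by
    intro V0 V1 hunion hdisj h0 h1
    by_contra hlt
    push_neg at hlt
    set m := k - 1 with hm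
    have hm0 : 0 < m := by omega
    set C := G.arcs.filter fun a => a.1 ∈ V0 ∧ a.2 ∈ V1 with hC
    have hCcard : C.card ≤ k - 2 := by omega
    -- colourings of the two induced subdigraphs
    have hsub0 : FDigraph.Subdigraph (G.induce V0) G :=
      ⟨Finset.inter_subset_left, by
        intro a ha; exact (FDigraph.mem_induce_arcs.mp ha).1⟩
    have hsub1 : FDigraph.Subdigraph (G.induce V1) G :=
      ⟨Finset.inter_subset_left, by
        intro a ha; exact (FDigraph.mem_induce_arcs.mp ha).1⟩
    have hmemV : ∀ W : Finset ℕ, W ⊆ G.verts → ∀ v ∈ W, v ∈ (G.induce W).verts := by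
      intro W hW v hv
      rw [FDigraph.induce_verts]
      exact Finset.mem_inter.mpr ⟨hW hv, hv⟩
    have hV0sub : V0 ⊆ G.verts := by rw [← hunion]; exact Finset.subset_union_left
    have hV1sub : V1 ⊆ G.verts := by rw [← hunion]; exact Finset.subset_union_right
    have hne0 : G.induce V0 ≠ G := by
      intro heq
      obtain ⟨v, hv⟩ := h1
      have hv0 : v ∉ V0 := fun hv0 => (Finset.disjoint_left.mp hdisj hv0) hv
      have hvmem : v ∈ (G.induce V0).verts := by rw [heq]; exact hV1sub hv
      rw [FDigraph.induce_verts] at hvmem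
      exact hv0 (Finset.mem_inter.mp hvmem).2
    have hne1 : G.induce V1 ≠ G := by
      intro heq
      obtain ⟨v, hv⟩ := h0
      have hv1 : v ∉ V1 := fun hv1 => (Finset.disjoint_left.mp hdisj hv) hv1
      have hvmem : v ∈ (G.induce V1).verts := by rw [heq]; exact hV0sub hv
      rw [FDigraph.induce_verts] at hvmem
      exact hv1 (Finset.mem_inter.mp hvmem).2
    obtain ⟨φ0, hφ0⟩ := FDigraph.exists_dicolouring_of_le _ (hG.2 _ hsub0 hne0)
    obtain ⟨φ1, hφ1⟩ := FDigraph.exists_dicolouring_of_le _ (hG.2 _ hsub1 hne1)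
    have hφ0lt : ∀ v ∈ V0, φ0 v < m := fun v hv => hφ0.1 v (hmemV V0 hV0sub v hv)
    have hφ1lt : ∀ v ∈ V1, φ1 v < m := fun v hv => hφ1.1 v (hmemV V1 hV1sub v hv)
    -- choose shift s avoiding all forbidden residues
    obtain ⟨s, hslt, hs⟩ :
        ∃ s, s < m ∧ ∀ a ∈ C, (φ0 a.1 + m - φ1 a.2) % m ≠ s := by
      by_contra hcon
      push_neg at hcon
      have hsubim : Finset.range m ⊆ C.image fun a => (φ0 a.1 + m - φ1 a.2) % m := by
        intro t ht
        obtain ⟨a, haC, hfa⟩ := hcon t (Finset.mem_range.mp ht)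
        exact Finset.mem_image.mpr ⟨a, haC, hfa⟩
      have h1' := Finset.card_le_card hsubim
      have h2' := Finset.card_image_le (s := C)
        (f := fun a => (φ0 a.1 + m - φ1 a.2) % m)
      rw [Finset.card_range] at h1'
      omega
    set φ : ℕ → ℕ := fun v => if v ∈ V0 then φ0 v else (φ1 v + s) % m with hφdef
    have hcol : G.IsDicolouring m φ := by
      constructor
      · intro v hv
        by_cases hvv : v ∈ V0
        · simpa [hφdef, hvv] using hφ0lt v hvv
        · simpa [hφdef, hvv] using Nat.mod_lt (φ1 v + s) hm0
      · intro c
        rintro ⟨l, hcyc, hlc⟩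
        have hlverts := G.mem_verts_of_dicycle hcyc
        by_cases hall0 : ∀ v ∈ l, v ∈ V0
        · refine hφ0.2 c ⟨l, G.dicycle_induce V0 hcyc hall0, fun v hv => ?_⟩
          have := hlc v hv
          simpa [hφdef, hall0 v hv] using this
        · by_cases hall1 : ∀ v ∈ l, v ∉ V0
          · have hallV1 : ∀ v ∈ l, v ∈ V1 := by
              intro v hv
              have hvg := hlverts v hv
              rw [← hunion] at hvg
              rcases Finset.mem_union.mp hvg with h | h
              · exact absurd h (hall1 v hv)
              · exact h
            obtain ⟨v0, hv0⟩ := List.exists_mem_of_ne_nil l hcyc.1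
            refine hφ1.2 (φ1 v0) ⟨l, G.dicycle_induce V1 hcyc hallV1, fun v hv => ?_⟩
            have e1 : (φ1 v + s) % m = c := by
              have := hlc v hv
              simpa [hφdef, hall1 v hv] using this
            have e2 : (φ1 v0 + s) % m = c := by
              have := hlc v0 hv0
              simpa [hφdef, hall1 v0 hv0] using this
            exact FDigraph0.mod_cancel (hφ1lt v (hallV1 v hv))
              (hφ1lt v0 (hallV1 v0 hv0)) (e1.trans e2.symm)
          · push_neg at hall0 hall1
            obtain ⟨w, hw, hw0⟩ := hall0
            obtain ⟨u, hu, hu0⟩ := hall1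
            have hcross : ∃ p ∈ l.zip (l.rotate 1), p.1 ∈ V0 ∧ p.2 ∉ V0 := by
              by_contra hnc
              push_neg at hnc
              exact hw0 (FDigraph0.cycle_closed l {x | x ∈ V0}
                (fun p hp h1 => hnc p hp h1) u hu hu0 w hw)
            obtain ⟨p, hp, hp1, hp2⟩ := hcross
            have hpa : p ∈ G.arcs := hcyc.2.2 p hp
            have hp1l : p.1 ∈ l := (List.of_mem_zip hp).1
            have hp2l : p.2 ∈ l := List.mem_rotate.mp (List.of_mem_zip hp).2
            have hp2V1 : p.2 ∈ V1 := by
              have hvg := hlverts p.2 hp2l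
              rw [← hunion] at hvg
              rcases Finset.mem_union.mp hvg with h | h
              · exact absurd h hp2
              · exact h
            have hpC : p ∈ C := Finset.mem_filter.mpr ⟨hpa, hp1, hp2V1⟩
            have e1 : φ0 p.1 = c := by
              have := hlc p.1 hp1l
              simpa [hφdef, hp1] using this
            have e2 : (φ1 p.2 + s) % m = c := by
              have := hlc p.2 hp2l
              simpa [hφdef, hp2] using this
            have hclt : c < m := e1 ▸ hφ0lt p.1 hp1
            have := FDigraph0.s_determined hclt (hφ1lt p.2 hp2V1) hslt e2
            rw [← e1] at this
            exact hs p hpC this.symm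
    have hle : G.dichi ≤ m := Nat.sInf_le ⟨φ, hcol⟩
    rw [hG.1] at hle
    omega
  refine ⟨?_, key⟩
  intro A' hA' hcard u hu v hv
  by_contra hreach
  set r : ℕ → ℕ → Prop := fun a b => (a, b) ∈ (G.removeArcs A').arcs with hr
  set R := G.verts.filter (fun w => Relation.ReflTransGen r u w) with hR
  have huR : u ∈ R := Finset.mem_filter.mpr ⟨hu, Relation.ReflTransGen.refl⟩
  have hvR : v ∉ R := fun h => hreach (Finset.mem_filter.mp h).2
  have h2 := key R (G.verts \ R)
    (Finset.union_sdiff_of_subset (Finset.filter_subset _ _))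
    Finset.disjoint_sdiff ⟨u, huR⟩ ⟨v, Finset.mem_sdiff.mpr ⟨hv, hvR⟩⟩
  have hsubA : (G.arcs.filter fun a => a.1 ∈ R ∧ a.2 ∈ G.verts \ R) ⊆ A' := by
    intro a ha
    simp only [Finset.mem_filter, Finset.mem_sdiff] at ha
    by_contra haA
    have harc : r a.1 a.2 := by
      show (a.1, a.2) ∈ (G.removeArcs A').arcs
      simp only [FDigraph.removeArcs, Finset.mem_sdiff]
      exact ⟨by simpa using ha.1, by simpa using haA⟩
    have : a.2 ∈ R := Finset.mem_filter.mpr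
      ⟨ha.2.2.1, ((Finset.mem_filter.mp ha.2.1).2).tail harc⟩
    exact ha.2.2.2 this
  have := Finset.card_le_card hsubA
  omega
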